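/- arXiv:2101.04284 — 10 statements merged into one kernel-verified Lean document; each statement's English description precedes it below -/
import Mathlib

section
/- Let x : ℕ → ℕ be a finitely supported function with x_i = 0 for all i < 3, such that Σ_{i≥3} (5·i − 14)·x_i = 28 and, for every i, either x_i = 0 or x_i ≥ 3. Then x_i = 0 for all i ≥ 5, and (x_3, x_4) is one of (28, 0), (10, 3), (4, 4). -/
/-- Enumeration of the possible face-vectors in the degree-7 case. -/
theorem degree_seven_face_vectors (x : ℕ →₀ ℕ)
    (h0 : ∀ i < 3, x i = 0)
    (hsum : ∑ i ∈ x.support, ((5 * (i : ℤ) - 14) * (x i : ℤ)) = 28)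
    (hmin : ∀ i, x i = 0 ∨ x i ≥ 3) :
    (∀ i ≥ 5, x i = 0) ∧
      ((x 3, x 4) = (28, 0) ∨ (x 3, x 4) = (10, 3) ∨ (x 3, x 4) = (4, 4)) := by
  have hmem : ∀ i ∈ x.support, 3 ≤ i := by
    intro i hi
    by_contra h
    exact Finsupp.mem_support_iff.mp hi (h0 i (by omega))
  have hnn : ∀ i ∈ x.support, (0:ℤ) ≤ (5 * (i:ℤ) - 14) * (x i : ℤ) := by
    intro i hi
    have h3 := hmem i hi
    have h3' : (3:ℤ) ≤ (i:ℤ) := by exact_mod_cast h3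
    have : (0:ℤ) ≤ (x i : ℤ) := Int.natCast_nonneg _
    nlinarith
  have h5 : ∀ i ≥ 5, x i = 0 := by
    intro i hi
    by_contra h
    have hi' : i ∈ x.support := Finsupp.mem_support_iff.mpr h
    have hx : 3 ≤ x i := (hmin i).resolve_left h
    have hle := Finset.single_le_sum hnn hi'
    rw [hsum] at hle
    have h5' : (5:ℤ) ≤ (i:ℤ) := by exact_mod_cast hi
    have hx' : (3:ℤ) ≤ (x i : ℤ) := by exact_mod_cast hx
    nlinarith
  refine ⟨h5, ?_⟩
  have hsub : x.support ⊆ ({3, 4} : Finset ℕ) := by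
    intro i hi
    have h3 := hmem i hi
    have : i < 5 := by
      by_contra h
      exact Finsupp.mem_support_iff.mp hi (h5 i (by omega))
    simp only [Finset.mem_insert, Finset.mem_singleton]
    omega
  have hsum2 : ∑ i ∈ ({3,4} : Finset ℕ), ((5 * (i : ℤ) - 14) * (x i : ℤ)) = 28 := by
    rw [← hsum]
    refine (Finset.sum_subset hsub ?_).symm
    intro i _ hi
    have : x i = 0 := Finsupp.notMem_support_iff.mp hi
    simp [this]
  have : (5 * (3:ℤ) - 14) * (x 3 : ℤ) + (5 * (4:ℤ) - 14) * (x 4 : ℤ) = 28 := by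
    simpa using hsum2
  have heq : (x 3 : ℤ) + 6 * (x 4 : ℤ) = 28 := by linarith
  have heqn : x 3 + 6 * x 4 = 28 := by exact_mod_cast heq
  rcases hmin 3 with h3 | h3 <;> rcases hmin 4 with h4 | h4 <;>
    simp only [Prod.mk.injEq] <;> omega
end

section
/- The only triples of positive integers (i, j, f0) with 4 ≤ i < j, f0 ≥ 12, f0·(i·j − 2·i − 2·j) = 4·i·j (as integers), i ∣ f0, j ∣ f0, and f0 ≥ 3·j, are (4, 5, 40) and (4, 6, 24). -/
/-- Vertex type `(3^3, i^1, j^1)`: the only solutions are `(4,5,40)` and `(4,6,24)`. -/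
theorem type_333ij (i j f0 : ℕ) :
    (0 < i ∧ 0 < j ∧ 0 < f0 ∧ 4 ≤ i ∧ i < j ∧ f0 ≥ 12 ∧
        (f0 : ℤ) * ((i : ℤ) * j - 2 * i - 2 * j) = 4 * (i : ℤ) * j ∧
        i ∣ f0 ∧ j ∣ f0 ∧ f0 ≥ 3 * j) ↔
      ((i, j, f0) = (4, 5, 40) ∨ (i, j, f0) = (4, 6, 24)) := by
  constructor
  · rintro ⟨hi, hj, hf, hi4, hij, hf12, heq, hidvd, hjdvd, h3j⟩
    have hI : (4 : ℤ) ≤ (i : ℤ) := by exact_mod_cast hi4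
    have hJ : (i : ℤ) < (j : ℤ) := by exact_mod_cast hij
    have hF : (12 : ℤ) ≤ (f0 : ℤ) := by exact_mod_cast hf12
    have hX : (0 : ℤ) < (i : ℤ) * j - 2 * i - 2 * j := by
      nlinarith [heq]
    have hjle : j ≤ 12 := by
      have : (j : ℤ) ≤ 12 := by nlinarith [heq]
      exact_mod_cast this
    have hile : i ≤ 11 := by omega
    interval_cases i <;> interval_cases j <;>
      (norm_num at heq ⊢; omega)
  · rintro (h | h) <;> simp_all <;> norm_num
end

section
/- The only triples of positive integers (i, j, f0) with i ≥ 4, j ≥ 3, f0 ≥ 12, f0·(5·i·j − 6·i − 12·j) = 12·i·j (as integers), i ∣ 2·f0, j ∣ f0, 2·f0 ≥ 3·i, and f0 ≥ 3·j, are (4, 4, 24) and (6, 3, 12). -/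
/-- Type `[3^1, i^1, 3^1, j^1, i^1]`: the only solutions are `(4,4,24)` and `(6,3,12)`. -/
theorem type_3i3ji (i j f0 : ℕ) :
    (0 < i ∧ 0 < j ∧ 0 < f0 ∧ i ≥ 4 ∧ j ≥ 3 ∧ f0 ≥ 12 ∧
        (f0 : ℤ) * (5 * (i : ℤ) * j - 6 * i - 12 * j) = 12 * (i : ℤ) * j ∧
        i ∣ 2 * f0 ∧ j ∣ f0 ∧ 2 * f0 ≥ 3 * i ∧ f0 ≥ 3 * j) ↔
      ((i, j, f0) = (4, 4, 24) ∨ (i, j, f0) = (6, 3, 12)) := by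
  constructor
  · rintro ⟨hi, hj, hf, hi4, hj3, hf12, heq, hdi, hdj, h1, h2⟩
    have hi' : (4:ℤ) ≤ (i:ℤ) := by exact_mod_cast hi4
    have hj' : (3:ℤ) ≤ (j:ℤ) := by exact_mod_cast hj3
    have hf' : (12:ℤ) ≤ (f0:ℤ) := by exact_mod_cast hf12
    have hD : (0:ℤ) < 5 * (i:ℤ) * j - 6 * i - 12 * j := by
      by_contra h
      push_neg at h
      nlinarith
    have hkey : 4 * (i:ℤ) * j ≤ 6 * i + 12 * j := by nlinarith
    have hi6 : i ≤ 6 := by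
      have : (i:ℤ) ≤ 6 := by nlinarith
      exact_mod_cast this
    have hj6 : j ≤ 6 := by
      have : (j:ℤ) ≤ 6 := by nlinarith
      exact_mod_cast this
    interval_cases i <;> interval_cases j <;>
      push_cast at heq <;>
      simp only [Prod.mk.injEq] at heq ⊢ <;>
      first
        | (exfalso; omega)
        | (left; refine ⟨trivial, trivial, ?_⟩; omega)
        | (right; refine ⟨trivial, trivial, ?_⟩; omega)
  · rintro (h | h) <;> (injection h with h1 h2; injection h2 with h2 h3; subst h1; subst h2; subst h3) <;>
      refine ⟨by norm_num, by norm_num, by norm_num, by norm_num, by norm_num, by norm_num, by norm_num, by norm_num, by norm_num, by norm_num, by norm_num⟩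
end

section
/- The only quadruples of positive integers (i, j, a, f0) with i ≥ 4, j ≥ 4, a ≥ 3, f0 ≥ 12, f0·(7·i·j·a − 6·i·a − 6·i·j − 12·j·a) = 12·i·j·a (as integers), 3 ∣ f0, i ∣ 2·f0, j ∣ f0, a ∣ f0, 2·f0 ≥ 3·i, f0 ≥ 3·j, and f0 ≥ 3·a, are (4, 4, 3, 24) and (4, 4, 4, 12). -/
/-- Type `[3^1, i^1, j^1, a^1, i^1]`: the only solutions are `(4,4,3,24)` and `(4,4,4,12)`. -/
theorem type_3ijai (i j a f0 : ℕ) :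
    (0 < i ∧ 0 < j ∧ 0 < a ∧ 0 < f0 ∧ i ≥ 4 ∧ j ≥ 4 ∧ a ≥ 3 ∧ f0 ≥ 12 ∧
        (f0 : ℤ) * (7 * (i : ℤ) * j * a - 6 * i * a - 6 * i * j - 12 * j * a) =
          12 * (i : ℤ) * j * a ∧
        3 ∣ f0 ∧ i ∣ 2 * f0 ∧ j ∣ f0 ∧ a ∣ f0 ∧
        2 * f0 ≥ 3 * i ∧ f0 ≥ 3 * j ∧ f0 ≥ 3 * a) ↔
      ((i, j, a, f0) = (4, 4, 3, 24) ∨ (i, j, a, f0) = (4, 4, 4, 12)) := by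
  constructor
  · rintro ⟨hi, hj, ha, hf, hi4, hj4, ha3, hf12, heq, h3, hI, hJ, hA, b1, b2, b3⟩
    have hiZ : (4 : ℤ) ≤ (i : ℤ) := by exact_mod_cast hi4
    have hjZ : (4 : ℤ) ≤ (j : ℤ) := by exact_mod_cast hj4
    have haZ : (3 : ℤ) ≤ (a : ℤ) := by exact_mod_cast ha3
    have hfZ : (12 : ℤ) ≤ (f0 : ℤ) := by exact_mod_cast hf12
    have hD : (0 : ℤ) < 7 * (i : ℤ) * j * a - 6 * i * a - 6 * i * j - 12 * j * a := by
      by_contra hle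
      push_neg at hle
      have h1 : (f0 : ℤ) * (7 * (i : ℤ) * j * a - 6 * i * a - 6 * i * j - 12 * j * a) ≤ 0 :=
        mul_nonpos_of_nonneg_of_nonpos (by positivity) hle
      nlinarith
    have hDle : 7 * (i : ℤ) * j * a - 6 * i * a - 6 * i * j - 12 * j * a ≤ (i : ℤ) * j * a := by
      nlinarith
    have key : 6 * (i : ℤ) * j * a ≤ 6 * i * a + 6 * i * j + 12 * j * a := by linarith
    have hile : (i : ℤ) ≤ 4 := by
      nlinarith [mul_nonneg (sub_nonneg.2 hjZ) (sub_nonneg.2 haZ)]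
    have hi4' : i = 4 := by have : i ≤ 4 := by exact_mod_cast hile
                            omega
    subst hi4'
    have key2 : (j : ℤ) * a ≤ 2 * a + 2 * j := by push_cast at key ⊢; linarith
    have hjle : (j : ℤ) ≤ 6 := by nlinarith
    have hale : (a : ℤ) ≤ 4 := by nlinarith
    have hj6 : j ≤ 6 := by exact_mod_cast hjle
    have ha4 : a ≤ 4 := by exact_mod_cast hale
    interval_cases j <;> interval_cases a <;> simp only [Prod.mk.injEq] <;> push_cast at heq <;> first | omega | (norm_num; omega)
  · rintro (h | h) <;>
      · simp only [Prod.mk.injEq] at h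
        obtain ⟨rfl, rfl, rfl, rfl⟩ := h
        norm_num
end

section
/- The only triples of positive integers (i, j, f0) with i ≥ 4, j ≥ 4, f0 ≥ 12, f0·(2·i·j − 3·i − 6·j) = 6·i·j (as integers), 3 ∣ f0, i ∣ 2·f0, j ∣ f0, 2·f0 ≥ 3·i, and f0 ≥ 3·j, are (4, 7, 84), (4, 8, 48), (4, 9, 36), (4, 10, 30), (5, 4, 120), (5, 5, 30), (6, 4, 24), (6, 5, 15) and (8, 4, 12). -/
/-- Type `[3^1, i^1, j^1, i^1]`: the nine solutions. -/
theorem type_3iji (i j f0 : ℕ) :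
    (0 < i ∧ 0 < j ∧ 0 < f0 ∧ i ≥ 4 ∧ j ≥ 4 ∧ f0 ≥ 12 ∧
        (f0 : ℤ) * (2 * (i : ℤ) * j - 3 * i - 6 * j) = 6 * (i : ℤ) * j ∧
        3 ∣ f0 ∧ i ∣ 2 * f0 ∧ j ∣ f0 ∧ 2 * f0 ≥ 3 * i ∧ f0 ≥ 3 * j) ↔
      ((i, j, f0) = (4, 7, 84) ∨ (i, j, f0) = (4, 8, 48) ∨ (i, j, f0) = (4, 9, 36) ∨
        (i, j, f0) = (4, 10, 30) ∨ (i, j, f0) = (5, 4, 120) ∨ (i, j, f0) = (5, 5, 30) ∨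
        (i, j, f0) = (6, 4, 24) ∨ (i, j, f0) = (6, 5, 15) ∨ (i, j, f0) = (8, 4, 12)) := by
  constructor
  · rintro ⟨hi0, hj0, hf0, hi, hj, hf, heq, h3, hif, hjf, h2f, hf3⟩
    have hi' : (4:ℤ) ≤ i := by exact_mod_cast hi
    have hj' : (4:ℤ) ≤ j := by exact_mod_cast hj
    have hf' : (12:ℤ) ≤ f0 := by exact_mod_cast hf
    have h2f' : 3*(i:ℤ) ≤ 2*f0 := by exact_mod_cast h2f
    have hf3' : 3*(j:ℤ) ≤ f0 := by exact_mod_cast hf3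
    have hD : 0 < 2*(i:ℤ)*j - 3*i - 6*j := by nlinarith
    have hi8 : i ≤ 8 := by
      have : (i:ℤ) ≤ 8 := by nlinarith
      exact_mod_cast this
    have hj10 : j ≤ 10 := by
      have : (j:ℤ) ≤ 10 := by nlinarith
      exact_mod_cast this
    interval_cases i <;> interval_cases j <;>
      first
      | omega
      | (push_cast at heq; norm_num [Prod.mk.injEq]; try omega)
  · rintro (h|h|h|h|h|h|h|h|h) <;>
      (simp only [Prod.mk.injEq] at h; obtain ⟨rfl, rfl, rfl⟩ := h) <;>
      refine ⟨by norm_num, by norm_num, by norm_num, by norm_num, by norm_num,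
        by norm_num, by norm_num, by norm_num, by norm_num, by norm_num,
        by norm_num, by norm_num⟩
end

section
/- The only quadruples of positive integers (i, j, a, f0) with i ≥ 4, 4 ≤ j ≤ a, f0 ≥ 12, f0·(i·j·a − i·j − i·a − 2·j·a) = 2·i·j·a (as integers), i ∣ 2·f0, j ∣ f0, a ∣ f0, 2·f0 ≥ 3·i, f0 ≥ 3·j, and f0 ≥ 3·a, are (4, 4, 5, 40), (4, 4, 6, 24), (4, 5, 5, 20), (5, 4, 4, 20) and (6, 4, 4, 12). -/
set_option maxHeartbeats 2000000 in
/-- Vertex types `(i^2, j^1, a^1)` and `[i^1, j^1, i^1, a^1]`: the five solutions. -/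
theorem type_iija (i j a f0 : ℕ) :
    (0 < i ∧ 0 < j ∧ 0 < a ∧ 0 < f0 ∧ i ≥ 4 ∧ 4 ≤ j ∧ j ≤ a ∧ f0 ≥ 12 ∧
        (f0 : ℤ) * ((i : ℤ) * j * a - i * j - i * a - 2 * j * a) = 2 * (i : ℤ) * j * a ∧
        i ∣ 2 * f0 ∧ j ∣ f0 ∧ a ∣ f0 ∧ 2 * f0 ≥ 3 * i ∧ f0 ≥ 3 * j ∧ f0 ≥ 3 * a) ↔
      ((i, j, a, f0) = (4, 4, 5, 40) ∨ (i, j, a, f0) = (4, 4, 6, 24) ∨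
        (i, j, a, f0) = (4, 5, 5, 20) ∨ (i, j, a, f0) = (5, 4, 4, 20) ∨
        (i, j, a, f0) = (6, 4, 4, 12)) := by
  constructor
  · rintro ⟨hi, hj, ha, hf, hi4, hj4, hja, hf12, heq, hdi, hdj, hda, h1, h2, h3⟩
    have hI : (4:ℤ) ≤ (i:ℤ) := by exact_mod_cast hi4
    have hJ : (4:ℤ) ≤ (j:ℤ) := by exact_mod_cast hj4
    have hJA : (j:ℤ) ≤ (a:ℤ) := by exact_mod_cast hja
    have hF : (12:ℤ) ≤ (f0:ℤ) := by exact_mod_cast hf12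
    have hA : (4:ℤ) ≤ (a:ℤ) := le_trans hJ hJA
    have hDpos : 0 < (i:ℤ) * j * a - i * j - i * a - 2 * j * a := by
      by_contra h
      push_neg at h
      have h2ija : (0:ℤ) < 2 * (i:ℤ) * j * a := by positivity
      have hle : (f0:ℤ) * ((i:ℤ) * j * a - i * j - i * a - 2 * j * a) ≤ 0 :=
        mul_nonpos_of_nonneg_of_nonpos (by linarith) h
      rw [heq] at hle
      linarith
    have hD1 : (1:ℤ) ≤ (i:ℤ) * j * a - i * j - i * a - 2 * j * a := hDpos
    have hkey : 10 * (i:ℤ) * j * a ≤ 12 * ((i:ℤ) * j) + 12 * ((i:ℤ) * a) + 24 * ((j:ℤ) * a) := by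
      nlinarith [mul_nonneg (by linarith : (0:ℤ) ≤ (f0:ℤ) - 12) (by linarith : (0:ℤ) ≤ (i:ℤ) * j * a - i * j - i * a - 2 * j * a)]
    have hi6 : i ≤ 6 := by
      have : (i:ℤ) ≤ 6 := by
        by_contra h; push_neg at h
        nlinarith [mul_nonneg (mul_nonneg (by linarith : (0:ℤ) ≤ (i:ℤ)) (by linarith : (0:ℤ) ≤ (j:ℤ))) (by linarith : (0:ℤ) ≤ (a:ℤ) - 4),
          mul_nonneg (mul_nonneg (by linarith : (0:ℤ) ≤ (i:ℤ)) (by linarith : (0:ℤ) ≤ (a:ℤ))) (by linarith : (0:ℤ) ≤ (j:ℤ) - 4),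
          mul_nonneg (mul_nonneg (by linarith : (0:ℤ) ≤ (j:ℤ)) (by linarith : (0:ℤ) ≤ (a:ℤ))) (by linarith : (0:ℤ) ≤ (i:ℤ) - 7),
          mul_pos (by linarith : (0:ℤ) < (j:ℤ)) (by linarith : (0:ℤ) < (a:ℤ))]
      exact_mod_cast this
    have hj6 : j ≤ 6 := by
      have : (j:ℤ) ≤ 6 := by
        by_contra h; push_neg at h
        nlinarith [mul_nonneg (mul_nonneg (by linarith : (0:ℤ) ≤ (j:ℤ)) (by linarith : (0:ℤ) ≤ (a:ℤ))) (by linarith : (0:ℤ) ≤ (i:ℤ) - 4),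
          mul_nonneg (by linarith : (0:ℤ) ≤ (i:ℤ)) (by linarith : (0:ℤ) ≤ (a:ℤ) - (j:ℤ)),
          mul_nonneg (mul_nonneg (by linarith : (0:ℤ) ≤ (i:ℤ)) (by linarith : (0:ℤ) ≤ (a:ℤ))) (by linarith : (0:ℤ) ≤ (j:ℤ) - 7),
          mul_pos (by linarith : (0:ℤ) < (i:ℤ)) (by linarith : (0:ℤ) < (a:ℤ))]
      exact_mod_cast this
    have ha12 : a ≤ 12 := by
      have : (a:ℤ) ≤ 12 := by
        by_contra h; push_neg at h
        nlinarith [mul_nonneg (mul_nonneg (by linarith : (0:ℤ) ≤ (i:ℤ)) (by linarith : (0:ℤ) ≤ (a:ℤ))) (by linarith : (0:ℤ) ≤ (j:ℤ) - 4),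
          mul_nonneg (mul_nonneg (by linarith : (0:ℤ) ≤ (j:ℤ)) (by linarith : (0:ℤ) ≤ (a:ℤ))) (by linarith : (0:ℤ) ≤ (i:ℤ) - 4),
          mul_nonneg (mul_nonneg (by linarith : (0:ℤ) ≤ (i:ℤ)) (by linarith : (0:ℤ) ≤ (j:ℤ))) (by linarith : (0:ℤ) ≤ (a:ℤ) - 13),
          mul_pos (by linarith : (0:ℤ) < (i:ℤ)) (by linarith : (0:ℤ) < (j:ℤ))]
      exact_mod_cast this
    clear hI hJ hJA hF hA hDpos hD1 hkey
    interval_cases i <;> interval_cases j <;> interval_cases a <;>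
      simp only [Prod.mk.injEq, true_and, and_true] <;> push_cast at heq <;> ring_nf at heq <;> omega
  · rintro (h | h | h | h | h) <;>
      (simp only [Prod.mk.injEq] at h; obtain ⟨rfl, rfl, rfl, rfl⟩ := h) <;>
      norm_num
end

section
/- The only triple of positive integers (i, j, f0) with i odd, i ≥ 5, j ≥ 4, j ≠ i, f0 ≥ 12, f0·(i·j − 2·i − 2·j) = 2·i·j (as integers), i ∣ 2·f0, j ∣ 2·f0, 2·f0 ≥ 3·i, and 2·f0 ≥ 3·j, is (5, 4, 20). -/
/-- Type `[i^1, j^1, i^1, j^1]` with `i` odd: the only solution is `(5, 4, 20)`. -/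
theorem type_ijij (i j f0 : ℕ) :
    (0 < i ∧ 0 < j ∧ 0 < f0 ∧ Odd i ∧ i ≥ 5 ∧ j ≥ 4 ∧ j ≠ i ∧ f0 ≥ 12 ∧
        (f0 : ℤ) * ((i : ℤ) * j - 2 * i - 2 * j) = 2 * (i : ℤ) * j ∧
        i ∣ 2 * f0 ∧ j ∣ 2 * f0 ∧ 2 * f0 ≥ 3 * i ∧ 2 * f0 ≥ 3 * j) ↔
      (i, j, f0) = (5, 4, 20) := by
  constructor
  · rintro ⟨hi, hj, hf, hodd, hi5, hj4, hji, hf12, heq, hdivi, hdivj, h3i, h3j⟩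
    have hI : (5:ℤ) ≤ (i:ℤ) := by exact_mod_cast hi5
    have hJ : (4:ℤ) ≤ (j:ℤ) := by exact_mod_cast hj4
    have hF : (12:ℤ) ≤ (f0:ℤ) := by exact_mod_cast hf12
    have hX : (0:ℤ) < (i:ℤ)*j - 2*i - 2*j := by
      by_contra h
      push_neg at h
      nlinarith [mul_nonpos_of_nonneg_of_nonpos (by linarith : (0:ℤ) ≤ (f0:ℤ)) h]
    have hj4' : j = 4 := by
      by_contra h
      have hJ5 : (5:ℤ) ≤ (j:ℤ) := by
        have : 5 ≤ j := by omega
        exact_mod_cast this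
      nlinarith [mul_nonneg (by linarith : (0:ℤ) ≤ (f0:ℤ)-12) (le_of_lt hX),
        mul_nonneg (by linarith : (0:ℤ) ≤ (i:ℤ)-5) (by linarith : (0:ℤ) ≤ (j:ℤ)-5)]
    subst hj4'
    have hi6 : (i:ℤ) ≤ 6 := by
      nlinarith [mul_nonneg (by linarith : (0:ℤ) ≤ (f0:ℤ)-12) (le_of_lt hX)]
    have hi6' : i ≤ 6 := by exact_mod_cast hi6
    obtain ⟨k, hk⟩ := hodd
    have hi5' : i = 5 := by omega
    subst hi5'
    have : (f0:ℤ) = 20 := by push_cast at heq; linarith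
    have : f0 = 20 := by exact_mod_cast this
    subst this
    rfl
  · rintro h
    rw [Prod.mk.injEq, Prod.mk.injEq] at h
    obtain ⟨h1, h2, h3⟩ := h
    subst h1; subst h2; subst h3
    refine ⟨by norm_num, by norm_num, by norm_num, ⟨2, by norm_num⟩, by norm_num,
      by norm_num, by norm_num, by norm_num, by norm_num, by norm_num, by norm_num,
      by norm_num, by norm_num⟩
end

section
/- The only triples of positive integers (i, j, f0) with 4 ≤ i < j, f0 ≥ 12, f0·(i·j − i − 3·j) = 2·i·j (as integers), i ∣ 3·f0, j ∣ f0, f0 ≥ i, and f0 ≥ 3·j, are (4, 5, 40) and (4, 6, 24). -/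
/-- Vertex type `(i^3, j^1)`: the only solutions are `(4,5,40)` and `(4,6,24)`. -/
theorem type_iiij (i j f0 : ℕ) :
    (0 < i ∧ 0 < j ∧ 0 < f0 ∧ 4 ≤ i ∧ i < j ∧ f0 ≥ 12 ∧
        (f0 : ℤ) * ((i : ℤ) * j - i - 3 * j) = 2 * (i : ℤ) * j ∧
        i ∣ 3 * f0 ∧ j ∣ f0 ∧ f0 ≥ i ∧ f0 ≥ 3 * j) ↔
      ((i, j, f0) = (4, 5, 40) ∨ (i, j, f0) = (4, 6, 24)) := by
  constructor
  · rintro ⟨hi0, hj0, hf0, hi4, hij, hf12, heq, hd1, hd2, hfi, hfj⟩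
    have hi4' : (4:ℤ) ≤ (i:ℤ) := by exact_mod_cast hi4
    have hij' : (i:ℤ) < (j:ℤ) := by exact_mod_cast hij
    have hf12' : (12:ℤ) ≤ (f0:ℤ) := by exact_mod_cast hf12
    have hd : (0:ℤ) < (i:ℤ) * j - i - 3 * j := by nlinarith
    have h12 : 10 * (i:ℤ) * j ≤ 12 * i + 36 * j := by nlinarith
    have hile : (i:ℤ) ≤ 4 := by nlinarith
    have hieq : i = 4 := by
      have : i ≤ 4 := by exact_mod_cast hile
      omega
    subst hieq
    have hjle : (j:ℤ) ≤ 12 := by push_cast at h12 ⊢; linarith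
    have hj12 : j ≤ 12 := by exact_mod_cast hjle
    simp only [Prod.mk.injEq]
    interval_cases j <;> norm_num at heq hd1 hd2 ⊢ <;> omega
  · rintro (h | h) <;> simp only [Prod.mk.injEq] at h <;>
      obtain ⟨rfl, rfl, rfl⟩ := h <;> refine ⟨by norm_num, by norm_num, by norm_num,
        by norm_num, by norm_num, by norm_num, by norm_num, by norm_num, by norm_num,
        by norm_num, by norm_num⟩
end

section
/- The only quadruples of positive integers (i, j, a, f0) with i, j, a even, 4 ≤ i < j < a, f0 ≥ 12, f0·(i·j·a − 2·i·j − 2·i·a − 2·j·a) = 4·i·j·a (as integers), i ∣ f0, j ∣ f0, a ∣ f0, and f0 ≥ 3·a, are (4, 6, 14, 168), (4, 6, 16, 96), (4, 6, 18, 72), (4, 6, 20, 60), (4, 8, 10, 80) and (4, 8, 12, 48). -/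
set_option maxHeartbeats 1000000 in
/-- Type `[i^1, j^1, a^1]` with `i < j < a` all even: the six solutions. -/
theorem type_ija (i j a f0 : ℕ) :
    (0 < i ∧ 0 < j ∧ 0 < a ∧ 0 < f0 ∧ Even i ∧ Even j ∧ Even a ∧
        4 ≤ i ∧ i < j ∧ j < a ∧ f0 ≥ 12 ∧
        (f0 : ℤ) * ((i : ℤ) * j * a - 2 * i * j - 2 * i * a - 2 * j * a) =
          4 * (i : ℤ) * j * a ∧
        i ∣ f0 ∧ j ∣ f0 ∧ a ∣ f0 ∧ f0 ≥ 3 * a) ↔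
      ((i, j, a, f0) = (4, 6, 14, 168) ∨ (i, j, a, f0) = (4, 6, 16, 96) ∨
        (i, j, a, f0) = (4, 6, 18, 72) ∨ (i, j, a, f0) = (4, 6, 20, 60) ∨
        (i, j, a, f0) = (4, 8, 10, 80) ∨ (i, j, a, f0) = (4, 8, 12, 48)) := by
  constructor
  · rintro ⟨hi, hj, ha, hf, hei, hej, hea, hi4, hij, hja, hf12, heq, hdi, hdj, hda, hf3a⟩
    rw [Nat.even_iff] at hei hej hea
    have hiz : (4:ℤ) ≤ (i:ℤ) := by exact_mod_cast hi4
    have hijz : (i:ℤ) < (j:ℤ) := by exact_mod_cast hij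
    have hjaz : (j:ℤ) < (a:ℤ) := by exact_mod_cast hja
    have hfz : (0:ℤ) < (f0:ℤ) := by exact_mod_cast hf
    have hfa : (f0:ℤ) ≥ 3*(a:ℤ) := by exact_mod_cast hf3a
    have hD : (0:ℤ) < (i:ℤ)*j*a - 2*i*j - 2*i*a - 2*j*a := by
      by_contra h
      push_neg at h
      nlinarith [mul_nonpos_of_nonneg_of_nonpos hfz.le h]
    have key : 3*(a:ℤ) * ((i:ℤ)*j*a - 2*i*j - 2*i*a - 2*j*a) ≤ 4*(i:ℤ)*j*a := by
      nlinarith [mul_le_mul_of_nonneg_right hfa hD.le]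
    -- i = 4
    have hi5 : i ≤ 5 := by
      by_contra h
      push_neg at h
      have h6 : (6:ℤ) ≤ (i:ℤ) := by exact_mod_cast h
      have h8 : (8:ℤ) ≤ (j:ℤ) := by omega
      have h10 : (10:ℤ) ≤ (a:ℤ) := by omega
      nlinarith [mul_nonneg (mul_nonneg (by linarith : (0:ℤ) ≤ (i:ℤ)-6)
          (by linarith : (0:ℤ) ≤ (j:ℤ)-8)) (by linarith : (0:ℤ) ≤ (a:ℤ)),
        mul_nonneg (by linarith : (0:ℤ) ≤ (i:ℤ)-6) (mul_self_nonneg (a:ℤ)),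
        mul_nonneg (by linarith : (0:ℤ) ≤ (j:ℤ)-8) (mul_self_nonneg (a:ℤ)),
        mul_nonneg (mul_nonneg (by linarith : (0:ℤ) ≤ (i:ℤ)-6)
          (by linarith : (0:ℤ) ≤ (j:ℤ)-8)) (mul_self_nonneg (a:ℤ)),
        mul_nonneg (mul_nonneg (by linarith : (0:ℤ) ≤ (a:ℤ)-10)
          (by linarith : (0:ℤ) ≤ (j:ℤ)-8)) (by linarith : (0:ℤ) ≤ (a:ℤ))]
    have hi' : i = 4 := by omega
    subst hi'
    push_cast at key hD heq
    -- j ≤ 9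
    have hj9 : j ≤ 9 := by
      by_contra h
      push_neg at h
      have h10 : (10:ℤ) ≤ (j:ℤ) := by exact_mod_cast h
      have h12 : (12:ℤ) ≤ (a:ℤ) := by omega
      nlinarith [mul_nonneg (mul_nonneg (by linarith : (0:ℤ) ≤ (j:ℤ)-10)
          (by linarith : (0:ℤ) ≤ (a:ℤ)-12)) (by linarith : (0:ℤ) ≤ (a:ℤ)),
        mul_nonneg (by linarith : (0:ℤ) ≤ (j:ℤ)-10) (mul_self_nonneg (a:ℤ)),
        mul_nonneg (by linarith : (0:ℤ) ≤ (a:ℤ)-12) (mul_self_nonneg (a:ℤ))]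
    have hj' : j = 6 ∨ j = 8 := by omega
    rcases hj' with rfl | rfl
    · have ha20 : a ≤ 20 := by
        by_contra h
        push_neg at h
        have h21 : (21:ℤ) ≤ (a:ℤ) := by exact_mod_cast h
        push_cast at key
        nlinarith
      interval_cases a <;> norm_num at heq <;> norm_num <;> omega
    · have ha13 : a ≤ 13 := by
        by_contra h
        push_neg at h
        have h14 : (14:ℤ) ≤ (a:ℤ) := by exact_mod_cast h
        push_cast at key
        nlinarith
      interval_cases a <;> norm_num at heq ⊢ <;> omega
  · rintro (h | h | h | h | h | h) <;>
      simp only [Prod.mk.injEq] at h <;>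
      obtain ⟨rfl, rfl, rfl, rfl⟩ := h <;>
      norm_num [Nat.even_iff]
end

section
/- The only triples of positive integers (i, j, f0) with i even, i ≥ 4, j ≥ 3, j ≠ i, f0 ≥ 12, f0·(i·j − 2·i − 4·j) = 4·i·j (as integers), i ∣ 2·f0, j ∣ f0, 2·f0 ≥ 3·i, and f0 ≥ 3·j, are (6, 7, 84), (6, 8, 48), (6, 9, 36), (6, 10, 30), (8, 5, 40), (8, 6, 24), (10, 4, 40), (10, 5, 20), (12, 4, 24), (14, 3, 84), (16, 3, 48), (18, 3, 36) and (20, 3, 30). -/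
set_option maxHeartbeats 8000000 in
/-- Type `[i^2, j^1]` with `i` even: the thirteen solutions. -/
theorem type_iij (i j f0 : ℕ) :
    (0 < i ∧ 0 < j ∧ 0 < f0 ∧ Even i ∧ i ≥ 4 ∧ j ≥ 3 ∧ j ≠ i ∧ f0 ≥ 12 ∧
        (f0 : ℤ) * ((i : ℤ) * j - 2 * i - 4 * j) = 4 * (i : ℤ) * j ∧
        i ∣ 2 * f0 ∧ j ∣ f0 ∧ 2 * f0 ≥ 3 * i ∧ f0 ≥ 3 * j) ↔
      ((i, j, f0) = (6, 7, 84) ∨ (i, j, f0) = (6, 8, 48) ∨ (i, j, f0) = (6, 9, 36) ∨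
        (i, j, f0) = (6, 10, 30) ∨ (i, j, f0) = (8, 5, 40) ∨ (i, j, f0) = (8, 6, 24) ∨
        (i, j, f0) = (10, 4, 40) ∨ (i, j, f0) = (10, 5, 20) ∨ (i, j, f0) = (12, 4, 24) ∨
        (i, j, f0) = (14, 3, 84) ∨ (i, j, f0) = (16, 3, 48) ∨ (i, j, f0) = (18, 3, 36) ∨
        (i, j, f0) = (20, 3, 30)) := by
  constructor
  · rintro ⟨hi, hj, hf, hev, hi4, hj3, hne, hf12, heq, hdvd2, hdvdj, h2f, hf3j⟩
    rw [Nat.even_iff] at hev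
    have hI : (4:ℤ) ≤ i := by exact_mod_cast hi4
    have hJ : (3:ℤ) ≤ j := by exact_mod_cast hj3
    have hF : (12:ℤ) ≤ f0 := by exact_mod_cast hf12
    have hf3j' : (3:ℤ) * j ≤ f0 := by exact_mod_cast hf3j
    have h2f' : (3:ℤ) * i ≤ 2 * f0 := by exact_mod_cast h2f
    have hB : (1:ℤ) ≤ (i:ℤ) * j - 2 * i - 4 * j := by nlinarith
    have h1 : 3 * (j:ℤ) * ((i:ℤ) * j - 2 * i - 4 * j) ≤ 4 * i * j := by nlinarith
    have h2 : 3 * (i:ℤ) * ((i:ℤ) * j - 2 * i - 4 * j) ≤ 8 * i * j := by nlinarith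
    have hA : 3 * (i:ℤ) * j ≤ 10 * i + 12 * j := by nlinarith
    have hBi : 3 * (i:ℤ) * j ≤ 6 * i + 20 * j := by nlinarith
    have h3 : 3 * (i:ℤ) ≤ 20 * j := by
      nlinarith [mul_nonneg (by linarith : (0:ℤ) ≤ (j:ℤ) - 3) (by linarith : (0:ℤ) ≤ (i:ℤ))]
    have hI5 : (5:ℤ) ≤ i := by
      by_contra h
      push_neg at h
      nlinarith [mul_nonneg (by linarith : (0:ℤ) ≤ 4 - (i:ℤ)) (by linarith : (0:ℤ) ≤ (j:ℤ) - 2)]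
    have hJ16 : (j:ℤ) ≤ 16 := by
      by_contra h
      push_neg at h
      nlinarith [mul_nonneg (by linarith : (0:ℤ) ≤ (i:ℤ) - 5) (by linarith : (0:ℤ) ≤ (j:ℤ) - 17)]
    have h9 : 9 * (i:ℤ) * i ≤ 236 * i := by
      nlinarith [mul_nonneg (by linarith : (0:ℤ) ≤ 3*(i:ℤ) - 12) (by linarith : (0:ℤ) ≤ 20*(j:ℤ) - 3*i)]
    have hI26 : (i:ℤ) ≤ 26 := by
      by_contra h
      push_neg at h
      nlinarith [mul_nonneg (by linarith : (0:ℤ) ≤ (i:ℤ) - 27) (by linarith : (0:ℤ) ≤ (i:ℤ))]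
    have hi26 : i ≤ 26 := by exact_mod_cast hI26
    have hj16 : j ≤ 16 := by exact_mod_cast hJ16
    have heqN : f0 * i * j = 4 * (i * j) + 2 * (f0 * i) + 4 * (f0 * j) := by
      zify
      linear_combination heq
    clear heq hB h1 h2 hA hBi h3 h9 hI hJ hF hf3j' h2f' hI5 hJ16 hI26
    simp only [Prod.mk.injEq]
    interval_cases i <;>
      first
        | exact absurd hev (by decide)
        | (interval_cases j <;> first | (exfalso; omega) | (norm_num <;> omega))
  · rintro (h|h|h|h|h|h|h|h|h|h|h|h|h) <;>
      simp only [Prod.mk.injEq] at h <;>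
      obtain ⟨rfl, rfl, rfl⟩ := h <;>
      refine ⟨by norm_num, by norm_num, by norm_num, by decide, by norm_num, by norm_num,
        by norm_num, by norm_num, by norm_num, by norm_num, by norm_num, by norm_num, by norm_num⟩
end
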